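/- Let s > 0 be a real number, let Y be a finite set with a weight function w: Y → ℝ≥0, and enumerate Y as y_1, y_2, …, y_r in nonincreasing order of w. If X ⊆ Y is s-sparse in Y, then s·w(X) ≤ w(Y). -/

import Mathlib

open scoped Classical

/-- The set of the first `k` elements of the finite linearly ordered type `Y`. -/
def firstN (Y : Type) [Fintype Y] [LinearOrder Y] (k : ℕ) : Finset Y :=
  Finset.univ.filter fun y => (Finset.univ.filter fun z : Y => z < y).card < k

/-- A nonempty subset `X` of `Y` is `s`-principal in `Y` if `X ⊆ Y_{s|X|}`,
where `Y_r` denotes the set of the first `⌊r⌋` elements of `Y`. -/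
def IsPrincipal {Y : Type} [Fintype Y] [LinearOrder Y] (s : ℝ) (X : Finset Y) : Prop :=
  X.Nonempty ∧ X ⊆ firstN Y ⌊s * X.card⌋₊

/-- A subset `X` of `Y` is `s`-sparse in `Y` if `X` contains no `s`-principal subset. -/
def IsSparse {Y : Type} [Fintype Y] [LinearOrder Y] (s : ℝ) (X : Finset Y) : Prop :=
  ∀ Z ⊆ X, ¬ IsPrincipal s Z

lemma firstN_downset {Y : Type} [Fintype Y] [LinearOrder Y] {k : ℕ} {y z : Y}
    (hy : y ∈ firstN Y k) (hz : z < y) : z ∈ firstN Y k := by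
  simp only [firstN, Finset.mem_filter, Finset.mem_univ, true_and] at hy ⊢
  refine lt_of_le_of_lt (Finset.card_le_card ?_) hy
  intro a ha
  simp only [Finset.mem_filter, Finset.mem_univ, true_and] at ha ⊢
  exact ha.trans hz

lemma sparse_aux (s : ℝ) (hs : 0 < s)
    (Y : Type) [Fintype Y] [LinearOrder Y] (X : Finset Y) :
    ∀ w : Y → ℝ, (∀ y, 0 ≤ w y) → (∀ a b : Y, a < b → w b ≤ w a) →
    IsSparse s X → s * ∑ y ∈ X, w y ≤ ∑ y, w y := by
  induction X using Finset.strongInduction with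
  | _ X ih =>
    intro w hw0 hmono hX
    rcases X.eq_empty_or_nonempty with rfl | hne
    · simp only [Finset.sum_empty, mul_zero]
      exact Finset.sum_nonneg fun y _ => hw0 y
    set x := X.max' hne with hxdef
    have hxX : x ∈ X := X.max'_mem hne
    set m := X.card with hm
    -- Step A: x not in firstN ⌊s*m⌋
    have hP := hX X (Finset.Subset.refl X)
    rw [IsPrincipal] at hP
    push_neg at hP
    have hns : ¬ X ⊆ firstN Y ⌊s * m⌋₊ := hP hne
    have hxnot : x ∉ firstN Y ⌊s * m⌋₊ := by
      intro hxin
      apply hns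
      intro z hz
      rcases lt_or_eq_of_le (X.le_max' z hz) with h | h
      · exact firstN_downset hxin h
      · rwa [h]
    have hrank : ⌊s * m⌋₊ ≤ (Finset.univ.filter fun z : Y => z < x).card := by
      simp only [firstN, Finset.mem_filter, Finset.mem_univ, true_and, not_lt] at hxnot
      exact hxnot
    -- N = #{y ≤ x} = rank + 1 > s*m
    set N := (Finset.univ.filter fun y : Y => y ≤ x).card with hN
    have hNsplit : (Finset.univ.filter fun y : Y => y ≤ x)
        = insert x (Finset.univ.filter fun z : Y => z < x) := by
      ext y
      simp only [Finset.mem_filter, Finset.mem_univ, true_and, Finset.mem_insert]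
      constructor
      · intro h; rcases lt_or_eq_of_le h with h | h
        · exact Or.inr h
        · exact Or.inl h
      · rintro (rfl | h)
        · exact le_refl _
        · exact le_of_lt h
    have hNcard : N = (Finset.univ.filter fun z : Y => z < x).card + 1 := by
      rw [hN, hNsplit, Finset.card_insert_of_notMem (by simp)]
    have hsmN : s * m ≤ (N : ℝ) := by
      have h1 : s * m < (⌊s * m⌋₊ : ℝ) + 1 := Nat.lt_floor_add_one _
      have h2 : (⌊s * m⌋₊ : ℝ) + 1 ≤ N := by
        rw [hNcard]
        push_cast
        have := hrank
        exact_mod_cast Nat.succ_le_succ this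
      linarith
    -- Inductive step on X' with modified weights
    set X' := X.erase x with hX'
    have hss : X' ⊂ X := Finset.erase_ssubset hxX
    set w' : Y → ℝ := fun y => max (w y - w x) 0 with hw'
    have hw0' : ∀ y, 0 ≤ w' y := fun y => le_max_right _ _
    have hmono' : ∀ a b : Y, a < b → w' b ≤ w' a := fun a b h =>
      max_le_max (by linarith [hmono a b h]) le_rfl
    have hXsp' : IsSparse s X' := fun Z hZ => hX Z (hZ.trans (Finset.erase_subset _ _))
    have IH := ih X' hss w' hw0' hmono' hXsp'
    -- Σ_{X'} w' = Σ_{X'} w - (m-1) * w x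
    have hcardX' : (X'.card : ℝ) = (m : ℝ) - 1 := by
      rw [hX', Finset.card_erase_of_mem hxX]
      have hm1 : 1 ≤ m := Finset.card_pos.mpr hne
      rw [← hm]
      push_cast [Nat.cast_sub hm1]
      ring
    have heq1 : ∀ y ∈ X', w' y = w y - w x := by
      intro y hy
      have hyx : y < x := lt_of_le_of_ne (X.le_max' y (Finset.mem_of_mem_erase hy))
        (Finset.ne_of_mem_erase hy)
      have := hmono y x hyx
      simp only [hw']
      rw [max_eq_left (by linarith)]
    have hsum1 : ∑ y ∈ X', w' y = (∑ y ∈ X', w y) - ((m : ℝ) - 1) * w x := by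
      rw [← hcardX', Finset.sum_congr rfl heq1, Finset.sum_sub_distrib,
        Finset.sum_const, nsmul_eq_mul]
    -- Σ_Y w' ≤ Σ_Y w - N * w x
    have hsum2 : ∑ y, w' y ≤ (∑ y, w y) - (N : ℝ) * w x := by
      have hsplit : (Finset.univ : Finset Y)
          = (Finset.univ.filter fun y : Y => y ≤ x) ∪ (Finset.univ.filter fun y : Y => ¬ y ≤ x) :=
        (Finset.filter_union_filter_not_eq _ _).symm
      have hdisj : Disjoint (Finset.univ.filter fun y : Y => y ≤ x)
          (Finset.univ.filter fun y : Y => ¬ y ≤ x) := Finset.disjoint_filter_filter_not _ _ _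
      rw [hsplit, Finset.sum_union hdisj, Finset.sum_union hdisj]
      have heq2 : ∀ y ∈ Finset.univ.filter (fun y : Y => y ≤ x), w' y = w y - w x := by
        intro y hy
        simp only [Finset.mem_filter, Finset.mem_univ, true_and] at hy
        have hwy : w x ≤ w y := by
          rcases lt_or_eq_of_le hy with h | h
          · exact hmono y x h
          · rw [h]
        simp only [hw']
        rw [max_eq_left (by linarith)]
      have h1 : ∑ y ∈ Finset.univ.filter (fun y : Y => y ≤ x), w' y
          = (∑ y ∈ Finset.univ.filter (fun y : Y => y ≤ x), w y) - (N : ℝ) * w x := by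
        rw [Finset.sum_congr rfl heq2, Finset.sum_sub_distrib,
          Finset.sum_const, nsmul_eq_mul, hN]
      have h2 : ∑ y ∈ Finset.univ.filter (fun y : Y => ¬ y ≤ x), w' y
          ≤ ∑ y ∈ Finset.univ.filter (fun y : Y => ¬ y ≤ x), w y := by
        refine Finset.sum_le_sum fun y _ => ?_
        simp only [hw']
        rcases max_cases (w y - w x) 0 with ⟨h, _⟩ | ⟨h, _⟩
        · rw [h]; linarith [hw0 x]
        · rw [h]; exact hw0 y
      linarith
    -- combine
    have hsumX : ∑ y ∈ X, w y = (∑ y ∈ X', w y) + w x := by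
      rw [hX', Finset.sum_erase_add _ _ hxX]
    have hwx0 : 0 ≤ w x := hw0 x
    rw [hsum1] at IH
    rw [hsumX]
    nlinarith [IH, hsum2, hsmN, hwx0]

theorem sparse_sets_are_light (s : ℝ) (hs : 0 < s)
    (Y : Type) [Fintype Y] [LinearOrder Y]
    (w : Y → ℝ) (hw0 : ∀ y, 0 ≤ w y)
    (hmono : ∀ a b : Y, a < b → w b ≤ w a)
    (X : Finset Y) (hX : IsSparse s X) :
    s * ∑ y ∈ X, w y ≤ ∑ y, w y := by
  exact sparse_aux s hs Y X w hw0 hmono hX
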